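/- For θ = 2 and τ = 1/2, the SBM limited slope coincides with the Minmod2 slope: for any real numbers a = (Γⱼ − Γⱼ₋₁)/Δx and b = (Γⱼ₊₁ − Γⱼ)/Δx with a ≠ 0, one has φ^{SBM}_{2,1/2}(b/a) · a = minmod(2a, (a+b)/2, 2b). -/
import Mathlib
set_option maxHeartbeats 1000000

lemma min_mul_negc (x y c : ℝ) (hc : c ≤ 0) : min x y * c = max (x*c) (y*c) := by
  rcases le_total x y with h|h
  · rw [min_eq_left h, max_eq_left (mul_le_mul_of_nonpos_right h hc)]
  · rw [min_eq_right h, max_eq_right (mul_le_mul_of_nonpos_right h hc)]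

lemma min_mul_posc (x y c : ℝ) (hc : 0 ≤ c) : min x y * c = min (x*c) (y*c) := by
  rcases le_total x y with h|h
  · rw [min_eq_left h, min_eq_left (mul_le_mul_of_nonneg_right h hc)]
  · rw [min_eq_right h, min_eq_right (mul_le_mul_of_nonneg_right h hc)]

noncomputable def sbm (θ τ r : ℝ) : ℝ :=
  if r ≤ 0 then 0
  else if r ≤ 1 then min (θ * r) (1 + τ * (r - 1))
  else r * min (θ / r) (1 + τ * (1 / r - 1))

noncomputable def minmod3 (a b c : ℝ) : ℝ :=
  if 0 < a ∧ 0 < b ∧ 0 < c then min a (min b c)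
  else if a < 0 ∧ b < 0 ∧ c < 0 then max a (max b c) else 0

theorem sbm_minmod2 (a b : ℝ) (ha : a ≠ 0) :
    sbm 2 (1 / 2) (b / a) * a = minmod3 (2 * a) ((a + b) / 2) (2 * b) := by
  unfold sbm minmod3
  rcases lt_trichotomy a 0 with hA | hA | hA
  · rcases le_or_gt 0 b with hB | hB
    · have hr : ¬ ¬ (b / a ≤ 0) := by
        push_neg
        exact div_nonpos_of_nonneg_of_nonpos hB hA.le
      push_neg at hr
      rw [if_pos hr]
      have h1 : ¬ (0 < 2*a ∧ 0 < (a+b)/2 ∧ 0 < 2*b) := by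
        rintro ⟨h, -, -⟩; linarith
      have h2 : ¬ (2*a < 0 ∧ (a+b)/2 < 0 ∧ 2*b < 0) := by
        rintro ⟨-, -, h⟩; linarith
      rw [if_neg h1, if_neg h2]; ring
    · -- a<0, b<0, r>0
      have hr : ¬ (b / a ≤ 0) := by
        push_neg; exact div_pos_of_neg_of_neg hB hA
      rw [if_neg hr]
      have h1 : ¬ (0 < 2*a ∧ 0 < (a+b)/2 ∧ 0 < 2*b) := by
        rintro ⟨h, -, -⟩; linarith
      have h2 : (2*a < 0 ∧ (a+b)/2 < 0 ∧ 2*b < 0) := by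
        refine ⟨by linarith, by linarith, by linarith⟩
      rw [if_neg h1, if_pos h2]
      rcases le_or_gt (b/a) 1 with hle | hgt
      · rw [if_pos hle]
        have hba : a ≤ b := by
          rw [div_le_one_iff] at hle
          rcases hle with ⟨h,_⟩|⟨h,h'⟩|⟨h,_⟩ <;> linarith
        have : min (2 * (b/a)) (1 + 1/2 * (b/a - 1)) * a
            = max (2 * (b/a) * a) ((1 + 1/2 * (b/a - 1)) * a) := by
          exact min_mul_negc _ _ _ hA.le
        rw [this]
        have e1 : 2 * (b/a) * a = 2 * b := by field_simp <;> ring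
        have e2 : (1 + 1/2 * (b/a - 1)) * a = (a+b)/2 := by field_simp <;> ring
        rw [e1, e2]
        rw [max_def, max_def, max_def]
        split_ifs <;> linarith
      · rw [if_neg (not_le.mpr hgt)]
        have hba : b < a := by
          rw [lt_div_iff_of_neg hA] at hgt; linarith
        have : b / a * min (2 / (b/a)) (1 + 1/2 * (1/(b/a) - 1)) * a
            = min (2 / (b/a)) (1 + 1/2 * (1/(b/a) - 1)) * (b/a * a) := by ring
        rw [this]
        have hb0 : (b:ℝ) ≠ 0 := ne_of_lt hB
        have hprod : b / a * a = b := div_mul_cancel₀ b ha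
        rw [hprod]
        have : min (2 / (b/a)) (1 + 1/2 * (1/(b/a) - 1)) * b
            = max (2 / (b/a) * b) ((1 + 1/2 * (1/(b/a) - 1)) * b) := by
          exact min_mul_negc _ _ _ hB.le
        rw [this]
        have e1 : 2 / (b/a) * b = 2 * a := by field_simp <;> ring
        have e2 : (1 + 1/2 * (1/(b/a) - 1)) * b = (a+b)/2 := by field_simp <;> ring
        rw [e1, e2]
        rw [max_def, max_def, max_def]
        split_ifs <;> linarith
  · exact absurd hA ha
  · rcases le_or_gt b 0 with hB | hB
    · have hr : b / a ≤ 0 := div_nonpos_of_nonpos_of_nonneg hB hA.le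
      rw [if_pos hr]
      have h1 : ¬ (0 < 2*a ∧ 0 < (a+b)/2 ∧ 0 < 2*b) := by
        rintro ⟨-, -, h⟩; linarith
      have h2 : ¬ (2*a < 0 ∧ (a+b)/2 < 0 ∧ 2*b < 0) := by
        rintro ⟨h, -, -⟩; linarith
      rw [if_neg h1, if_neg h2]; ring
    · have hr : ¬ (b / a ≤ 0) := by
        push_neg; exact div_pos hB hA
      rw [if_neg hr]
      have h1 : (0 < 2*a ∧ 0 < (a+b)/2 ∧ 0 < 2*b) :=
        ⟨by linarith, by linarith, by linarith⟩
      rw [if_pos h1]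
      rcases le_or_gt (b/a) 1 with hle | hgt
      · rw [if_pos hle]
        have hba : b ≤ a := by
          rw [div_le_one hA] at hle; exact hle
        have : min (2 * (b/a)) (1 + 1/2 * (b/a - 1)) * a
            = min (2 * (b/a) * a) ((1 + 1/2 * (b/a - 1)) * a) := by
          exact min_mul_posc _ _ _ hA.le
        rw [this]
        have e1 : 2 * (b/a) * a = 2 * b := by field_simp <;> ring
        have e2 : (1 + 1/2 * (b/a - 1)) * a = (a+b)/2 := by field_simp <;> ring
        rw [e1, e2]
        rw [min_def, min_def, min_def]
        split_ifs <;> linarith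
      · rw [if_neg (not_le.mpr hgt)]
        have hba : a < b := by
          rw [lt_div_iff₀ hA] at hgt; linarith
        have : b / a * min (2 / (b/a)) (1 + 1/2 * (1/(b/a) - 1)) * a
            = min (2 / (b/a)) (1 + 1/2 * (1/(b/a) - 1)) * (b/a * a) := by ring
        rw [this, div_mul_cancel₀ b ha]
        have hb0 : (b:ℝ) ≠ 0 := ne_of_gt hB
        have : min (2 / (b/a)) (1 + 1/2 * (1/(b/a) - 1)) * b
            = min (2 / (b/a) * b) ((1 + 1/2 * (1/(b/a) - 1)) * b) := by
          exact min_mul_posc _ _ _ hB.le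
        rw [this]
        have e1 : 2 / (b/a) * b = 2 * a := by field_simp <;> ring
        have e2 : (1 + 1/2 * (1/(b/a) - 1)) * b = (a+b)/2 := by field_simp <;> ring
        rw [e1, e2]
        rw [min_def, min_def, min_def]
        split_ifs <;> linarith
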